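/- For all integers m ≥ 2 and k ≥ 1, the product {2}·{m} divides {km+2}·{(k+1)m} in Z[s,t], and the quotient {km+2}{(k+1)m}/({2}{m}) — the Lucas–Coxeter–Fuss–Catalan analogue for the dihedral Coxeter group I_2(m) — is a polynomial in s and t all of whose coefficients are nonnegative integers. -/
import Mathlib


open MvPolynomial Finset

noncomputable section

/-- Polynomial ring ℤ[s,t] with s = X 0, t = X 1. -/
abbrev P2 : Type := MvPolynomial (Fin 2) ℤ

def ps : P2 := X 0
def pt : P2 := X 1

/-- The Lucas sequence of polynomials: {0}=0, {1}=1, {n}=s{n-1}+t{n-2}. -/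
def lucas : ℕ → P2
  | 0 => 0
  | 1 => 1
  | (n+2) => ps * lucas (n+1) + pt * lucas n

/-- The Lucastorial {n}! = {1}{2}⋯{n}. -/
def lucasFact (n : ℕ) : P2 := ∏ i ∈ Finset.range n, lucas (i+1)

/-- The d-divisible Lucastorial {n:d}! = {d}{2d}⋯{nd}. -/
def lucasFactD (d n : ℕ) : P2 := ∏ i ∈ Finset.range n, lucas (d*(i+1))

/-- A polynomial lies in ℕ[s,t]: all coefficients are nonnegative. -/
def Nonneg (p : P2) : Prop := ∀ m, 0 ≤ p.coeff m

/-- The fraction field ℤ(s,t). -/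
abbrev K : Type := FractionRing P2

def φ : P2 →+* K := algebraMap P2 K

def L (n : ℕ) : K := φ (lucas n)

def LFact (n : ℕ) : K := φ (lucasFact n)

def LFactD (d n : ℕ) : K := φ (lucasFactD d n)

/-- The Lucasnomial {n choose k}, as an element of the fraction field. -/
def lnom (n k : ℕ) : K := LFact n / (LFact k * LFact (n-k))

/-- The d-divisible Lucasnomial {n:d choose k:d}, as an element of the fraction field. -/
def lnomD (d n k : ℕ) : K := LFactD d n / (LFactD d k * LFactD d (n-k))

/-- The Lucas-Catalan number C_{n} = (1/{n+1}) {2n choose n}. -/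
def catL (n : ℕ) : K := lnom (2*n) n / L (n+1)

/-- The Lucas-Fuss-Catalan number C_{n,k} = (1/{kn+1}) {(k+1)n choose n}. -/
def fussCatL (n k : ℕ) : K := lnom ((k+1)*n) n / L (k*n+1)

lemma nng_add {p q : P2} (hp : Nonneg p) (hq : Nonneg q) : Nonneg (p + q) := by
  intro m; simp only [MvPolynomial.coeff_add]; exact add_nonneg (hp m) (hq m)

lemma nng_mul {p q : P2} (hp : Nonneg p) (hq : Nonneg q) : Nonneg (p * q) := by
  intro m
  rw [MvPolynomial.coeff_mul]
  exact Finset.sum_nonneg fun i _ => mul_nonneg (hp _) (hq _)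

lemma nonneg_ps : Nonneg ps := by
  intro m
  classical
  simp [ps, MvPolynomial.coeff_X']
  split <;> simp

lemma nonneg_pt : Nonneg pt := by
  intro m
  classical
  simp [pt, MvPolynomial.coeff_X']
  split <;> simp

lemma nonneg_one : Nonneg (1 : P2) := by
  intro m
  classical
  simp [MvPolynomial.coeff_one]
  split <;> simp

lemma nonneg_zero : Nonneg (0 : P2) := by intro m; simp

lemma nonneg_lucas : ∀ n, Nonneg (lucas n) := by
  intro n
  induction n using Nat.twoStepInduction with
  | zero => simpa [lucas] using nonneg_zero
  | one => simpa [lucas] using nonneg_one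
  | more n ih1 ih2 =>
    show Nonneg (lucas (n+2))
    rw [lucas]
    exact nng_add (nng_mul nonneg_ps ih2) (nng_mul nonneg_pt ih1)

lemma lucas_add (a b : ℕ) :
    lucas (a + b + 1) = lucas (a+1) * lucas (b+1) + pt * lucas a * lucas b := by
  induction b using Nat.twoStepInduction generalizing a with
  | zero => simp [lucas]
  | one =>
    show lucas (a + 2) = lucas (a+1) * lucas 2 + pt * lucas a * lucas 1
    rw [show lucas 2 = ps * 1 + pt * 0 from rfl, show lucas 1 = 1 from rfl]
    rw [show a + 2 = a + 1 + 1 from rfl]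
    cases a with
    | zero => simp [lucas]
    | succ a => rw [show a + 1 + 1 = a + 2 from rfl, lucas]; ring
  | more b ih1 ih2 =>
    have e1 := ih1 a
    have e2 := ih2 a
    have : a + (b + 2) + 1 = (a + b + 1) + 2 := by ring
    rw [this, lucas, show a + b + 1 + 1 = a + (b+1) + 1 from by ring] at *
    rw [e2, e1]
    rw [show b + 2 + 1 = (b+1) + 2 from rfl, lucas, show b + 2 = b + 1 + 1 from rfl,
      show lucas (b+1+1) = ps * lucas (b+1) + pt * lucas b from by
        cases b with
        | zero => simp [lucas]
        | succ b => rw [lucas]]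
    ring

lemma lucas_dvd (d n : ℕ) (hd : 1 ≤ d) :
    ∃ q : P2, Nonneg q ∧ lucas (d * n) = q * lucas d := by
  induction n with
  | zero => exact ⟨0, nonneg_zero, by simp [lucas]⟩
  | succ n ih =>
    obtain ⟨q, hq, hqe⟩ := ih
    refine ⟨lucas (d*n+1) + pt * q * lucas (d-1), (nng_add (nonneg_lucas _) (nng_mul (nng_mul nonneg_pt hq) (nonneg_lucas _))), ?_⟩
    have h1 : d * (n+1) = d * n + (d - 1) + 1 := by rw [Nat.mul_succ]; omega
    have h2 : d - 1 + 1 = d := by omega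
    rw [h1, lucas_add, h2, hqe]
    ring

/-- for m ≥ 2, k ≥ 1, {2}{m} divides {km+2}{(k+1)m} with quotient
(Cat^{(k)} I_2(m)) in ℕ[s,t]. -/
theorem coxeterFussCatalan_I2 (m k : ℕ) (hm : 2 ≤ m) (hk : 1 ≤ k) :
    ∃ p : P2, Nonneg p ∧
      lucas (k*m+2) * lucas ((k+1)*m) = p * (lucas 2 * lucas m) := by
  obtain ⟨r, hr, hre⟩ := lucas_dvd m (k+1) (by omega)
  rcases Nat.even_or_odd (k * m) with he | ho
  · obtain ⟨j, hj⟩ := he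
    obtain ⟨q, hq, hqe⟩ := lucas_dvd 2 (j + 1) (by omega)
    refine ⟨q * r, nng_mul hq hr, ?_⟩
    have : k * m + 2 = 2 * (j + 1) := by omega
    rw [this, show (k+1)*m = m*(k+1) from Nat.mul_comm _ _, hqe, hre]
    ring
  · -- m odd, k odd, (k+1) even
    obtain ⟨hko, hmo⟩ := Nat.odd_mul.mp ho
    obtain ⟨j, hj⟩ := hko
    -- (k+1)*m = (2*m) * (j+1)
    obtain ⟨e, he, hee⟩ := lucas_dvd (2*m) (j+1) (by omega)
    -- lucas (2*m) = (q1 + pt*q2) * (lucas 2 * lucas m)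
    obtain ⟨m2, hm2⟩ := hmo
    obtain ⟨q1, hq1, hq1e⟩ := lucas_dvd 2 (m2 + 1) (by omega)  -- lucas (m+1)
    obtain ⟨q2, hq2, hq2e⟩ := lucas_dvd 2 m2 (by omega)        -- lucas (m-1)
    have h2m : lucas (2*m) = (q1 + pt * q2) * (lucas 2 * lucas m) := by
      have ha : 2 * m = m + (m - 1) + 1 := by omega
      have hb : m - 1 + 1 = m := by omega
      have hc : m + 1 = 2 * (m2 + 1) := by omega
      have hd : m - 1 = 2 * m2 := by omega
      rw [ha, lucas_add, hb, hc, hd, hq1e, hq2e]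
      ring
    refine ⟨lucas (k*m+2) * (e * (q1 + pt * q2)),
      nng_mul (nonneg_lucas _) (nng_mul he (nng_add hq1 (nng_mul nonneg_pt hq2))), ?_⟩
    subst hj
    have hkm : (2 * j + 1 + 1) * m = 2 * m * (j + 1) := by ring
    rw [hkm, hee, h2m]
    ring
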